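/- arXiv:1004.5269 — 4 statements merged into one kernel-verified Lean document; each statement's English description precedes it below -/
import Mathlib

section
/- Let H be a real inner product space, let u_1, …, u_d ∈ H be orthonormal and let v_1, …, v_d ∈ H satisfy Σ_{i=1}^d ‖v_i‖² ≤ 1/4. Define the d×d Gram matrix A by A_{ij} = ⟨u_i + v_i, u_j + v_j⟩. Then ⟨Aξ, ξ⟩ ≥ (1/4)|ξ|² for every ξ ∈ ℝ^d; in particular A is symmetric positive definite and det A ≥ 4^{−d}. -/
/-- If `u_1, …, u_d` are orthonormal in a real inner product space `H` and
`v_1, …, v_d` satisfy `Σ ‖v_i‖² ≤ 1/4`, then the Gram matrix `A_{ij} = ⟨u_i + v_i, u_j + v_j⟩`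
satisfies `⟨Aξ, ξ⟩ ≥ (1/4)|ξ|²` for every `ξ ∈ ℝ^d`; in particular `A` is symmetric positive
definite and `det A ≥ 4^{−d}`. -/
theorem stmt_5 (d : ℕ)
    (H : Type*) [NormedAddCommGroup H] [InnerProductSpace ℝ H]
    (u v : Fin d → H) (hu : Orthonormal ℝ u)
    (hv : ∑ i, ‖v i‖ ^ 2 ≤ 1 / 4)
    (A : Matrix (Fin d) (Fin d) ℝ)
    (hA : ∀ i j, A i j = (inner ℝ (u i + v i) (u j + v j) : ℝ)) :
    (∀ ξ : Fin d → ℝ, (1 / 4) * ∑ i, ξ i ^ 2 ≤ ∑ i, ∑ j, A i j * ξ i * ξ j) ∧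
    A.IsSymm ∧ A.PosDef ∧ ((4 : ℝ) ^ d)⁻¹ ≤ A.det := by
  -- The quadratic form is the squared norm of ∑ ξ i • (u i + v i)
  have hform : ∀ ξ : Fin d → ℝ,
      ∑ i, ∑ j, A i j * ξ i * ξ j = ‖∑ i, ξ i • (u i + v i)‖ ^ 2 := by
    intro ξ
    rw [← real_inner_self_eq_norm_sq, sum_inner]
    refine Finset.sum_congr rfl fun i _ => ?_
    rw [inner_sum]
    refine Finset.sum_congr rfl fun j _ => ?_
    rw [real_inner_smul_left, real_inner_smul_right, hA]
    ring
  -- the main quadratic form bound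
  have key : ∀ ξ : Fin d → ℝ,
      (1 / 4) * ∑ i, ξ i ^ 2 ≤ ∑ i, ∑ j, A i j * ξ i * ξ j := by
    intro ξ
    set S : ℝ := ∑ i, ξ i ^ 2 with hS
    have hS0 : 0 ≤ S := Finset.sum_nonneg fun i _ => sq_nonneg _
    have hUsq : ‖∑ i, ξ i • u i‖ ^ 2 = S := by
      rw [← real_inner_self_eq_norm_sq, hu.inner_sum ξ ξ, hS]
      exact Finset.sum_congr rfl fun i _ => by simp [pow_two]
    have hU : ‖∑ i, ξ i • u i‖ = Real.sqrt S := by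
      rw [← hUsq, Real.sqrt_sq (norm_nonneg _)]
    have hVle : ‖∑ i, ξ i • v i‖ ≤ Real.sqrt S / 2 := by
      have h1 : ‖∑ i, ξ i • v i‖ ≤ ∑ i, |ξ i| * ‖v i‖ := by
        refine (norm_sum_le _ _).trans_eq ?_
        refine Finset.sum_congr rfl fun i _ => ?_
        rw [norm_smul, Real.norm_eq_abs]
      have h2 : (∑ i, |ξ i| * ‖v i‖) ^ 2 ≤ (∑ i, |ξ i| ^ 2) * ∑ i, ‖v i‖ ^ 2 :=
        Finset.sum_mul_sq_le_sq_mul_sq _ _ _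
      have h3 : (∑ i, |ξ i| ^ 2) = S := by simp [hS, sq_abs]
      have h4 : (∑ i, |ξ i| * ‖v i‖) ^ 2 ≤ S * (1 / 4) := by
        refine h2.trans ?_
        rw [h3]
        exact mul_le_mul_of_nonneg_left hv hS0
      have h5 : (∑ i, |ξ i| * ‖v i‖) ≤ Real.sqrt (S * (1 / 4)) :=
        Real.le_sqrt_of_sq_le h4
      have h6 : Real.sqrt (S * (1 / 4)) = Real.sqrt S / 2 := by
        rw [Real.sqrt_mul hS0,
          show (1 : ℝ) / 4 = (1 / 2 : ℝ) ^ 2 by norm_num,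
          Real.sqrt_sq (by norm_num : (0:ℝ) ≤ 1/2)]
        ring
      calc ‖∑ i, ξ i • v i‖ ≤ ∑ i, |ξ i| * ‖v i‖ := h1
        _ ≤ Real.sqrt (S * (1 / 4)) := h5
        _ = Real.sqrt S / 2 := h6
    have hsplit : (∑ i, ξ i • (u i + v i)) = (∑ i, ξ i • u i) + ∑ i, ξ i • v i := by
      rw [← Finset.sum_add_distrib]
      exact Finset.sum_congr rfl fun i _ => smul_add _ _ _
    have hWlb : Real.sqrt S / 2 ≤ ‖∑ i, ξ i • (u i + v i)‖ := by
      rw [hsplit]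
      have h6 := norm_sub_le ((∑ i, ξ i • u i) + ∑ i, ξ i • v i) (∑ i, ξ i • v i)
      rw [add_sub_cancel_right, hU] at h6
      linarith
    rw [hform ξ]
    have h7 : (Real.sqrt S / 2) ^ 2 ≤ ‖∑ i, ξ i • (u i + v i)‖ ^ 2 :=
      pow_le_pow_left₀ (by positivity) hWlb 2
    calc (1/4) * S = (Real.sqrt S / 2) ^ 2 := by
          rw [div_pow, Real.sq_sqrt hS0]; ring
      _ ≤ _ := h7
  -- symmetry
  have hsymm : A.IsSymm := by
    ext i j
    rw [Matrix.transpose_apply, hA, hA, real_inner_comm]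
  have hherm : A.IsHermitian := by
    ext i j
    rw [Matrix.conjTranspose_apply, hA, hA, star_trivial, real_inner_comm]
  -- the dot-product form of the quadratic form
  have hdot : ∀ ξ : Fin d → ℝ,
      dotProduct (star ξ) (A.mulVec ξ) = ∑ i, ∑ j, A i j * ξ i * ξ j := by
    intro ξ
    simp only [dotProduct, Matrix.mulVec, Pi.star_apply, star_trivial]
    rw [Finset.sum_congr rfl fun i _ => Finset.mul_sum _ _ _]
    exact Finset.sum_congr rfl fun i _ => Finset.sum_congr rfl fun j _ => by ring
  -- positive definiteness
  have hposdef : A.PosDef := by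
    refine Matrix.posDef_iff_dotProduct_mulVec.mpr ⟨hherm, fun ξ hξ => ?_⟩
    have hS0 : 0 < ∑ i, ξ i ^ 2 := by
      have hex : ∃ i, ξ i ≠ 0 := by
        by_contra h
        push_neg at h
        exact hξ (funext h)
      obtain ⟨i, hi⟩ := hex
      exact Finset.sum_pos' (fun j _ => sq_nonneg _)
        ⟨i, Finset.mem_univ i, by positivity⟩
    rw [hdot ξ]
    calc (0:ℝ) < (1 / 4) * ∑ i, ξ i ^ 2 := by positivity
      _ ≤ _ := key ξ
  -- determinant bound via eigenvalues
  have hdet : ((4 : ℝ) ^ d)⁻¹ ≤ A.det := by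
    have heig : ∀ i, (1 / 4 : ℝ) ≤ hherm.eigenvalues i := by
      intro i
      have h1 := hherm.eigenvalues_eq i
      set ξ : Fin d → ℝ := ⇑(hherm.eigenvectorBasis i) with hξ
      have hnorm : ∑ j, ξ j ^ 2 = 1 := by
        have h2 : (inner ℝ (hherm.eigenvectorBasis i) (hherm.eigenvectorBasis i) : ℝ) = 1 := by
          rw [real_inner_self_eq_norm_sq, hherm.eigenvectorBasis.orthonormal.1 i]
          norm_num
        rw [PiLp.inner_apply] at h2
        simpa [sq] using h2
      have h3 : hherm.eigenvalues i = ∑ k, ∑ j, A k j * ξ k * ξ j := by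
        rw [h1, ← hdot ξ]
        simp
      rw [h3]
      calc (1/4 : ℝ) = (1 / 4) * ∑ j, ξ j ^ 2 := by rw [hnorm]; ring
        _ ≤ _ := key ξ
    rw [hherm.det_eq_prod_eigenvalues]
    calc ((4:ℝ) ^ d)⁻¹ = ∏ _i : Fin d, (1/4 : ℝ) := by
          rw [Finset.prod_const]
          simp [one_div, inv_pow]
      _ ≤ ∏ i, hherm.eigenvalues i :=
          Finset.prod_le_prod (fun i _ => by norm_num) (fun i _ => heig i)
  exact ⟨key, hsymm, hposdef, hdet⟩
end

section
/- For every d ≥ 1 there exists a constant C_d > 0 depending only on d with the following property. Let H be a real inner product space, let u_1, …, u_d ∈ H be orthonormal, let v_1, …, v_d ∈ H and set ρ = (Σ_{i=1}^d ‖v_i‖²)^{1/2}. Define the d×d Gram matrix A by A_{ij} = ⟨u_i + v_i, u_j + v_j⟩ and assume det A ≥ 4^{−d}. Then A is invertible and max_{1≤i,j≤d} |(A^{−1})_{ij} − δ_{ij}| ≤ C_d (1 + ρ)^{2d−1} ρ, where δ_{ij} is the Kronecker delta. -/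
/-- For every `d ≥ 1` there is a constant `C_d > 0` such that: if
`u_1, …, u_d` are orthonormal in a real inner product space `H`, `v_1, …, v_d ∈ H`,
`ρ = (Σ ‖v_i‖²)^{1/2}`, and the Gram matrix `A_{ij} = ⟨u_i + v_i, u_j + v_j⟩` has
`det A ≥ 4^{−d}`, then `A` is invertible and
`max_{i,j} |(A⁻¹)_{ij} − δ_{ij}| ≤ C_d (1 + ρ)^{2d−1} ρ`. -/
theorem stmt_6 (d : ℕ) (hd : 1 ≤ d) :
    ∃ C : ℝ, 0 < C ∧
      ∀ (H : Type) [NormedAddCommGroup H] [InnerProductSpace ℝ H]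
        (u v : Fin d → H), Orthonormal ℝ u →
      ∀ (A : Matrix (Fin d) (Fin d) ℝ),
        (∀ i j, A i j = (inner ℝ (u i + v i) (u j + v j) : ℝ)) →
        ((4 : ℝ) ^ d)⁻¹ ≤ A.det →
        IsUnit A.det ∧
        ∀ i j, |A⁻¹ i j - (if i = j then (1 : ℝ) else 0)|
          ≤ C * (1 + Real.sqrt (∑ k, ‖v k‖ ^ 2)) ^ (2 * d - 1)
              * Real.sqrt (∑ k, ‖v k‖ ^ 2) := by
  refine ⟨2 * d * d.factorial * 4 ^ d, by positivity, ?_⟩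
  intro H _ _ u v hu A hA hdet
  set ρ : ℝ := Real.sqrt (∑ k, ‖v k‖ ^ 2) with hρdef
  have hρ0 : (0:ℝ) ≤ ρ := Real.sqrt_nonneg _
  set M : ℝ := 1 + ρ with hMdef
  have hM1 : (1:ℝ) ≤ M := by rw [hMdef]; linarith
  have hM0 : (0:ℝ) ≤ M := by linarith
  -- each ‖v k‖ ≤ ρ
  have hv : ∀ k, ‖v k‖ ≤ ρ := by
    intro k
    have h1 : ‖v k‖ ^ 2 ≤ ∑ i, ‖v i‖ ^ 2 :=
      Finset.single_le_sum (f := fun i => ‖v i‖ ^ 2) (fun i _ => sq_nonneg _) (Finset.mem_univ k)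
    calc ‖v k‖ = Real.sqrt (‖v k‖ ^ 2) := by rw [Real.sqrt_sq (norm_nonneg _)]
      _ ≤ ρ := Real.sqrt_le_sqrt h1
  have hnorm : ∀ k, ‖u k + v k‖ ≤ M := by
    intro k
    calc ‖u k + v k‖ ≤ ‖u k‖ + ‖v k‖ := norm_add_le _ _
      _ ≤ 1 + ρ := by have := hv k; rw [hu.1 k]; linarith
  -- entries bounded by M^2
  have hAbound : ∀ i j, |A i j| ≤ M ^ 2 := by
    intro i j
    rw [hA]
    calc |(inner ℝ (u i + v i) (u j + v j) : ℝ)|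
        ≤ ‖u i + v i‖ * ‖u j + v j‖ := abs_real_inner_le_norm _ _
      _ ≤ M * M := mul_le_mul (hnorm i) (hnorm j) (norm_nonneg _) hM0
      _ = M ^ 2 := (sq M).symm
  -- entries close to identity
  have hAdelta : ∀ i j, |A i j - (if i = j then (1:ℝ) else 0)| ≤ 2 * M * ρ := by
    intro i j
    have huu : (inner ℝ (u i) (u j) : ℝ) = if i = j then 1 else 0 :=
      orthonormal_iff_ite.mp hu i j
    have expand : A i j = (inner ℝ (u i) (u j) : ℝ) + inner ℝ (u i) (v j)
        + inner ℝ (v i) (u j) + inner ℝ (v i) (v j) := by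
      rw [hA]; simp [inner_add_left, inner_add_right]; ring
    have h1 : |(inner ℝ (u i) (v j) : ℝ)| ≤ ρ := by
      calc |(inner ℝ (u i) (v j) : ℝ)| ≤ ‖u i‖ * ‖v j‖ := abs_real_inner_le_norm _ _
        _ ≤ 1 * ρ := by have := hv j; rw [hu.1 i]; nlinarith [norm_nonneg (v j)]
        _ = ρ := one_mul ρ
    have h2 : |(inner ℝ (v i) (u j) : ℝ)| ≤ ρ := by
      calc |(inner ℝ (v i) (u j) : ℝ)| ≤ ‖v i‖ * ‖u j‖ := abs_real_inner_le_norm _ _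
        _ ≤ ρ * 1 := by have := hv i; rw [hu.1 j]; nlinarith [norm_nonneg (v i)]
        _ = ρ := mul_one ρ
    have h3 : |(inner ℝ (v i) (v j) : ℝ)| ≤ ρ * ρ := by
      calc |(inner ℝ (v i) (v j) : ℝ)| ≤ ‖v i‖ * ‖v j‖ := abs_real_inner_le_norm _ _
        _ ≤ ρ * ρ := mul_le_mul (hv i) (hv j) (norm_nonneg _) hρ0
    rw [expand, huu]
    have heq : (if i = j then (1:ℝ) else 0) + inner ℝ (u i) (v j) + inner ℝ (v i) (u j)
        + inner ℝ (v i) (v j) - (if i = j then (1:ℝ) else 0)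
        = (inner ℝ (u i) (v j) : ℝ) + inner ℝ (v i) (u j) + inner ℝ (v i) (v j) := by ring
    rw [heq]
    have ha := abs_add_le ((inner ℝ (u i) (v j) : ℝ) + inner ℝ (v i) (u j)) (inner ℝ (v i) (v j) : ℝ)
    have hb := abs_add_le (inner ℝ (u i) (v j) : ℝ) (inner ℝ (v i) (u j) : ℝ)
    rw [hMdef]; nlinarith
  have hdetpos : (0:ℝ) < A.det := lt_of_lt_of_le (by positivity) hdet
  have hunit : IsUnit A.det := isUnit_iff_ne_zero.mpr hdetpos.ne'
  refine ⟨hunit, ?_⟩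
  -- adjugate entry bound
  have hadj : ∀ i j, |A.adjugate i j| ≤ d.factorial * M ^ (2 * d - 2) := by
    intro i j
    rw [Matrix.adjugate_apply, Matrix.det_apply']
    set B := A.updateRow j (Pi.single i (1:ℝ)) with hB
    have hBrow : ∀ c, B j c = (Pi.single (M := fun _ : Fin d => ℝ) i 1) c := by
      intro c; rw [hB, Matrix.updateRow_self]
    have hBother : ∀ r c, r ≠ j → B r c = A r c := fun r c h => by
      rw [hB, Matrix.updateRow_ne h]
    have hprod : ∀ σ : Equiv.Perm (Fin d), |∏ c, B (σ c) c| ≤ M ^ (2 * d - 2) := by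
      intro σ
      by_cases h : σ i = j
      · have hsplit : ∏ c, B (σ c) c = B (σ i) i * ∏ c ∈ Finset.univ.erase i, B (σ c) c :=
          (Finset.mul_prod_erase Finset.univ _ (Finset.mem_univ i)).symm
        rw [hsplit, h, hBrow i, Pi.single_eq_same, one_mul, Finset.abs_prod]
        have hle : ∀ c ∈ Finset.univ.erase i, |B (σ c) c| ≤ M ^ 2 := by
          intro c hc
          have hci : c ≠ i := Finset.ne_of_mem_erase hc
          have hcj : σ c ≠ j := fun hcj => hci (σ.injective (hcj.trans h.symm))
          rw [hBother _ _ hcj]; exact hAbound _ _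
        calc ∏ c ∈ Finset.univ.erase i, |B (σ c) c|
            ≤ ∏ _c ∈ Finset.univ.erase i, M ^ 2 :=
              Finset.prod_le_prod (fun c _ => abs_nonneg _) hle
          _ = (M ^ 2) ^ (Finset.univ.erase i).card := Finset.prod_const _
          _ = M ^ (2 * d - 2) := by
              rw [Finset.card_erase_of_mem (Finset.mem_univ i), Finset.card_univ,
                Fintype.card_fin, ← pow_mul]
              congr 1; omega
      · have hne : σ.symm j ≠ i := fun hc => h (by rw [← hc, Equiv.apply_symm_apply])
        have hzero : B (σ (σ.symm j)) (σ.symm j) = 0 := by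
          rw [Equiv.apply_symm_apply, hBrow, Pi.single_eq_of_ne hne]
        have hp : ∏ c, B (σ c) c = 0 :=
          Finset.prod_eq_zero (Finset.mem_univ (σ.symm j)) hzero
        rw [hp, abs_zero]; positivity
    calc |∑ σ : Equiv.Perm (Fin d), ((Equiv.Perm.sign σ : ℤ) : ℝ) * ∏ c, B (σ c) c|
        ≤ ∑ σ : Equiv.Perm (Fin d), |((Equiv.Perm.sign σ : ℤ) : ℝ) * ∏ c, B (σ c) c| :=
          Finset.abs_sum_le_sum_abs _ _
      _ ≤ ∑ _σ : Equiv.Perm (Fin d), M ^ (2 * d - 2) := by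
          apply Finset.sum_le_sum
          intro σ _
          rw [abs_mul]
          have hs : |((Equiv.Perm.sign σ : ℤ) : ℝ)| = 1 := by
            rcases Int.units_eq_one_or (Equiv.Perm.sign σ) with h | h <;> rw [h] <;> norm_num
          rw [hs, one_mul]; exact hprod σ
      _ = (Fintype.card (Equiv.Perm (Fin d))) * M ^ (2 * d - 2) := by
          rw [Finset.sum_const, Finset.card_univ, nsmul_eq_mul]
      _ = d.factorial * M ^ (2 * d - 2) := by
          rw [Fintype.card_perm, Fintype.card_fin]
  -- inverse entry bound
  have hinvdet : (A.det)⁻¹ ≤ 4 ^ d := by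
    have h4 : (0:ℝ) < ((4:ℝ) ^ d)⁻¹ := by positivity
    calc (A.det)⁻¹ ≤ (((4:ℝ) ^ d)⁻¹)⁻¹ := by
          apply inv_anti₀ h4 hdet
      _ = 4 ^ d := inv_inv _
  have hinv : ∀ i k, |A⁻¹ i k| ≤ 4 ^ d * (d.factorial * M ^ (2 * d - 2)) := by
    intro i k
    rw [Matrix.inv_def, Matrix.smul_apply, Ring.inverse_eq_inv, smul_eq_mul, abs_mul,
      abs_of_pos (inv_pos.mpr hdetpos)]
    exact mul_le_mul hinvdet (hadj i k) (abs_nonneg _) (by positivity)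
  intro i j
  have hmul := Matrix.nonsing_inv_mul A hunit
  have h1 : ∑ k, A⁻¹ i k * A k j = (if i = j then (1:ℝ) else 0) := by
    have := congrFun (congrFun hmul i) j
    rwa [Matrix.mul_apply, Matrix.one_apply] at this
  have h2 : ∑ k, A⁻¹ i k * ((if k = j then (1:ℝ) else 0) - A k j)
      = A⁻¹ i j - (if i = j then (1:ℝ) else 0) := by
    simp only [mul_sub]
    rw [Finset.sum_sub_distrib, h1]
    congr 1
    simp [mul_ite]
  rw [← h2]
  have hpow : M ^ (2 * d - 2) * M = M ^ (2 * d - 1) := by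
    rw [← pow_succ]; congr 1; omega
  calc |∑ k, A⁻¹ i k * ((if k = j then (1:ℝ) else 0) - A k j)|
      ≤ ∑ k, |A⁻¹ i k * ((if k = j then (1:ℝ) else 0) - A k j)| :=
        Finset.abs_sum_le_sum_abs _ _
    _ ≤ ∑ _k : Fin d, (4 ^ d * (d.factorial * M ^ (2 * d - 2))) * (2 * M * ρ) := by
        apply Finset.sum_le_sum
        intro k _
        rw [abs_mul]
        apply mul_le_mul (hinv i k) ?_ (abs_nonneg _) (by positivity)
        rw [abs_sub_comm]
        exact hAdelta k j
    _ = d * ((4 ^ d * (d.factorial * M ^ (2 * d - 2))) * (2 * M * ρ)) := by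
        rw [Finset.sum_const, Finset.card_univ, Fintype.card_fin, nsmul_eq_mul]
    _ = 2 * d * d.factorial * 4 ^ d * M ^ (2 * d - 1) * ρ := by
        rw [← hpow]; ring
end

section
/- Let a > 0 and p ≥ 1. For every x ∈ [a, 2a) one has (a/(2a − x)²)^p · ψ_a(x) ≤ e · a^{−p} · sup_{y ≥ 0} y^{2p} e^{−y} = e · a^{−p} · (2p/e)^{2p}. Consequently, at every point x ≠ a where ψ_a is differentiable and ψ_a(x) > 0, one has |ψ_a'(x)/ψ_a(x)|^p ψ_a(x) ≤ e · a^{−p} · (2p/e)^{2p}. -/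
open Classical

/-- The localization function `ψ_a`: `ψ_a(x) = 1` for `x < a`,
`ψ_a(x) = exp(1 − a/(2a − x))` for `a ≤ x < 2a`, and `ψ_a(x) = 0` for `x ≥ 2a`. -/
noncomputable def psiLoc (a : ℝ) (x : ℝ) : ℝ :=
  if x < a then 1 else if x < 2 * a then Real.exp (1 - a / (2 * a - x)) else 0

lemma aux_le (c : ℝ) (hc : 0 < c) (y : ℝ) (hy : 0 ≤ y) :
    y ^ c * Real.exp (-y) ≤ (c / Real.exp 1) ^ c := by
  rcases eq_or_lt_of_le hy with h | h
  · rw [← h, Real.zero_rpow hc.ne', zero_mul]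
    positivity
  · have hce : (c / Real.exp 1) ^ c = Real.exp ((Real.log c - 1) * c) := by
      rw [Real.rpow_def_of_pos (by positivity), Real.log_div hc.ne' (Real.exp_pos 1).ne',
        Real.log_exp]
    rw [hce, Real.rpow_def_of_pos h, ← Real.exp_add]
    apply Real.exp_le_exp.2
    have h1 := Real.log_le_sub_one_of_pos (show 0 < y / c by positivity)
    rw [Real.log_div h.ne' hc.ne'] at h1
    have h2 : c * (y / c - 1) = y - c := by field_simp
    nlinarith [mul_le_mul_of_nonneg_left h1 hc.le]

lemma aux_eq (c : ℝ) (hc : 0 < c) :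
    c ^ c * Real.exp (-c) = (c / Real.exp 1) ^ c := by
  rw [Real.div_rpow hc.le (Real.exp_pos 1).le, Real.exp_one_rpow, Real.exp_neg, div_eq_mul_inv]

/-- For `a > 0` and `p ≥ 1`, for every `x ∈ [a, 2a)` one has
`(a/(2a − x)²)^p ψ_a(x) ≤ e a^{−p} sup_{y ≥ 0} y^{2p} e^{−y} = e a^{−p} (2p/e)^{2p}`.
Consequently, at every `x ≠ a` where `ψ_a` is differentiable and `ψ_a(x) > 0`,
`|ψ_a'(x)/ψ_a(x)|^p ψ_a(x) ≤ e a^{−p} (2p/e)^{2p}`. -/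
theorem stmt_8 (a p : ℝ) (ha : 0 < a) (hp : 1 ≤ p) :
    (∀ x ∈ Set.Ico a (2 * a),
      (a / (2 * a - x) ^ 2) ^ p * psiLoc a x
        ≤ Real.exp 1 * a ^ (-p)
            * (⨆ y : {y : ℝ // 0 ≤ y}, (y : ℝ) ^ (2 * p) * Real.exp (-(y : ℝ)))) ∧
    (⨆ y : {y : ℝ // 0 ≤ y}, (y : ℝ) ^ (2 * p) * Real.exp (-(y : ℝ)))
        = (2 * p / Real.exp 1) ^ (2 * p) ∧
    (∀ x : ℝ, x ≠ a → DifferentiableAt ℝ (psiLoc a) x → 0 < psiLoc a x →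
      |deriv (psiLoc a) x / psiLoc a x| ^ p * psiLoc a x
        ≤ Real.exp 1 * a ^ (-p) * (2 * p / Real.exp 1) ^ (2 * p)) := by
  have hc : (0:ℝ) < 2 * p := by linarith
  have hbdd : BddAbove (Set.range fun y : {y : ℝ // 0 ≤ y} =>
      (y : ℝ) ^ (2 * p) * Real.exp (-(y : ℝ))) := by
    refine ⟨(2 * p / Real.exp 1) ^ (2 * p), ?_⟩
    rintro _ ⟨y, rfl⟩
    exact aux_le _ hc _ y.2
  -- Part 2
  have part2 : (⨆ y : {y : ℝ // 0 ≤ y}, (y : ℝ) ^ (2 * p) * Real.exp (-(y : ℝ)))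
      = (2 * p / Real.exp 1) ^ (2 * p) := by
    apply le_antisymm
    · exact ciSup_le fun y => aux_le _ hc _ y.2
    · rw [← aux_eq _ hc]
      exact le_ciSup hbdd ⟨2 * p, hc.le⟩
  -- Part 1
  have part1 : ∀ x ∈ Set.Ico a (2 * a),
      (a / (2 * a - x) ^ 2) ^ p * psiLoc a x
        ≤ Real.exp 1 * a ^ (-p)
            * (⨆ y : {y : ℝ // 0 ≤ y}, (y : ℝ) ^ (2 * p) * Real.exp (-(y : ℝ))) := by
    rintro x ⟨hx1, hx2⟩
    have ht : 0 < 2 * a - x := by linarith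
    set y : ℝ := a / (2 * a - x) with hy
    have hy0 : 0 < y := by positivity
    have hpsi : psiLoc a x = Real.exp 1 * Real.exp (-y) := by
      rw [psiLoc, if_neg (not_lt.2 hx1), if_pos hx2, sub_eq_add_neg, Real.exp_add]
    have hbase : a / (2 * a - x) ^ 2 = y ^ 2 / a := by
      rw [hy]; field_simp
    have hrw : (a / (2 * a - x) ^ 2) ^ p = y ^ (2 * p) * a ^ (-p) := by
      rw [hbase, div_eq_mul_inv, ← Real.rpow_neg_one a,
        Real.mul_rpow (by positivity) (by positivity),
        ← Real.rpow_natCast y 2, ← Real.rpow_mul hy0.le, ← Real.rpow_mul ha.le]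
      push_cast
      ring_nf
    rw [hpsi, hrw]
    have hle : y ^ (2 * p) * Real.exp (-y)
        ≤ ⨆ z : {z : ℝ // 0 ≤ z}, (z : ℝ) ^ (2 * p) * Real.exp (-(z : ℝ)) :=
      le_ciSup hbdd ⟨y, hy0.le⟩
    calc y ^ (2 * p) * a ^ (-p) * (Real.exp 1 * Real.exp (-y))
        = Real.exp 1 * a ^ (-p) * (y ^ (2 * p) * Real.exp (-y)) := by ring
      _ ≤ _ := by
          apply mul_le_mul_of_nonneg_left hle
          positivity
  refine ⟨part1, part2, ?_⟩
  -- Part 3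
  intro x hxa _ hpos
  have hx2 : x < 2 * a := by
    by_contra h
    rw [psiLoc, if_neg (by push_neg at h ⊢; linarith), if_neg (not_lt.2 (not_lt.1 h))] at hpos
    exact lt_irrefl 0 hpos
  rcases lt_or_gt_of_ne hxa with hlt | hgt
  · -- x < a : locally constant, derivative 0
    have heq : psiLoc a =ᶠ[nhds x] fun _ => (1:ℝ) := by
      filter_upwards [Iio_mem_nhds hlt] with z hz
      rw [psiLoc, if_pos (Set.mem_Iio.1 hz)]
    have hd : deriv (psiLoc a) x = 0 := by
      rw [heq.deriv_eq]; simp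
    rw [hd, zero_div, abs_zero, Real.zero_rpow (by linarith), zero_mul]
    positivity
  · -- a < x < 2a
    have ht : 0 < 2 * a - x := by linarith
    have heq : psiLoc a =ᶠ[nhds x] fun z => Real.exp (1 - a / (2 * a - z)) := by
      filter_upwards [Ioo_mem_nhds hgt hx2] with z hz
      rw [psiLoc, if_neg (not_lt.2 hz.1.le), if_pos hz.2]
    have h1 : HasDerivAt (fun z => a / (2 * a - z)) (a / (2 * a - x) ^ 2) x := by
      have hden : HasDerivAt (fun z : ℝ => 2 * a - z) (-1) x := by
        simpa using (hasDerivAt_id x).const_sub (2 * a)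
      have := (hasDerivAt_const x a).div hden ht.ne'
      refine this.congr_deriv ?_
      ring
    have h2 : HasDerivAt (fun z => Real.exp (1 - a / (2 * a - z)))
        (Real.exp (1 - a / (2 * a - x)) * (-(a / (2 * a - x) ^ 2))) x :=
      (h1.const_sub 1).exp
    have hpsix : psiLoc a x = Real.exp (1 - a / (2 * a - x)) := by
      rw [psiLoc, if_neg (not_lt.2 hgt.le), if_pos hx2]
    have hderiv : deriv (psiLoc a) x
        = Real.exp (1 - a / (2 * a - x)) * (-(a / (2 * a - x) ^ 2)) := by
      rw [heq.deriv_eq, h2.deriv]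
    have hratio : deriv (psiLoc a) x / psiLoc a x = -(a / (2 * a - x) ^ 2) := by
      rw [hderiv, hpsix, mul_comm, mul_div_assoc, div_self (Real.exp_ne_zero _), mul_one]
    rw [hratio, abs_neg, abs_of_pos (by positivity), ← part2]
    exact part1 x ⟨hgt.le, hx2⟩
end

section
/- Let T > 0, d, n, m ≥ 1 and let σ : ℝ^d × ℝ^n → ℝ^{d×m}, b̄ : ℝ^d × ℝ^n → ℝ^d, α : ℝ^d × ℝ^n → ℝ^{n×m}, β̄ : ℝ^d × ℝ^n → ℝ^n be bounded Lipschitz functions. Let x ∈ C¹([0,T]; ℝ^d), y₀ ∈ ℝ^n, and assume there is λ_* > 0 such that ⟨σσ*(x_t, y)ξ, ξ⟩ ≥ λ_* |ξ|² for all t ∈ [0,T], y ∈ ℝ^n and ξ ∈ ℝ^d. Then there exist y ∈ C¹([0,T]; ℝ^n) with y(0) = y₀ and a continuous (hence square-integrable) control φ : [0,T] → ℝ^m such that for every t ∈ [0,T]: x'(t) = σ(x_t, y_t)φ_t + b̄(x_t, y_t) and y'(t) = α(x_t, y_t)φ_t + β̄(x_t, y_t). -/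
open MeasureTheory

set_option maxHeartbeats 1000000

open Classical ContinuousLinearMap in
noncomputable def cInv {E : Type*} [NormedAddCommGroup E] [InnerProductSpace ℝ E]
    [CompleteSpace E] (A : E →L[ℝ] E) : E →L[ℝ] E :=
  if h : LinearMap.ker (A : E →ₗ[ℝ] E) = ⊥ ∧ LinearMap.range (A : E →ₗ[ℝ] E) = ⊤ then
    ((ContinuousLinearEquiv.ofBijective A h.1 h.2).symm : E →L[ℝ] E)
  else 0

variable {E : Type*} [NormedAddCommGroup E] [InnerProductSpace ℝ E]
  [CompleteSpace E] [FiniteDimensional ℝ E]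

theorem coercive_ker_range {lam : ℝ} (hlam : 0 < lam) (A : E →L[ℝ] E)
    (h : ∀ ξ, lam * ‖ξ‖ ^ 2 ≤ (inner ℝ (A ξ) ξ : ℝ)) :
    LinearMap.ker (A : E →ₗ[ℝ] E) = ⊥ ∧ LinearMap.range (A : E →ₗ[ℝ] E) = ⊤ := by
  have hinj : Function.Injective A := by
    intro a b hab
    have h1 : A (a - b) = 0 := by rw [map_sub, hab, sub_self]
    have h2 := h (a - b)
    rw [h1, inner_zero_left] at h2
    have h4 : ‖a - b‖ ^ 2 ≤ 0 := by
      have := (mul_le_mul_iff_right₀ hlam).mp (h2.trans_eq (mul_zero lam).symm)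
      simpa using this
    have h3 : ‖a - b‖ = 0 := by nlinarith [norm_nonneg (a - b)]
    exact sub_eq_zero.mp (norm_eq_zero.mp h3)
  have hker : LinearMap.ker (A : E →ₗ[ℝ] E) = ⊥ := LinearMap.ker_eq_bot.mpr hinj
  have hsurj : Function.Surjective A :=
    LinearMap.injective_iff_surjective.mp hinj
  exact ⟨hker, LinearMap.range_eq_top.mpr hsurj⟩

theorem cInv_right_inv {lam : ℝ} (hlam : 0 < lam) (A : E →L[ℝ] E)
    (h : ∀ ξ, lam * ‖ξ‖ ^ 2 ≤ (inner ℝ (A ξ) ξ : ℝ)) (w : E) :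
    A (cInv A w) = w := by
  rw [cInv, dif_pos (coercive_ker_range hlam A h)]
  exact (ContinuousLinearEquiv.ofBijective A _ _).apply_symm_apply w

theorem cInv_left_inv {lam : ℝ} (hlam : 0 < lam) (A : E →L[ℝ] E)
    (h : ∀ ξ, lam * ‖ξ‖ ^ 2 ≤ (inner ℝ (A ξ) ξ : ℝ)) (w : E) :
    cInv A (A w) = w := by
  rw [cInv, dif_pos (coercive_ker_range hlam A h)]
  exact (ContinuousLinearEquiv.ofBijective A _ _).symm_apply_apply w

theorem cInv_norm_le {lam : ℝ} (hlam : 0 < lam) (A : E →L[ℝ] E)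
    (h : ∀ ξ, lam * ‖ξ‖ ^ 2 ≤ (inner ℝ (A ξ) ξ : ℝ)) (w : E) :
    ‖cInv A w‖ ≤ lam⁻¹ * ‖w‖ := by
  set u := cInv A w with hu
  have hAu : A u = w := cInv_right_inv hlam A h w
  have h1 : lam * ‖u‖ ^ 2 ≤ ‖w‖ * ‖u‖ := by
    calc lam * ‖u‖ ^ 2 ≤ (inner ℝ (A u) u : ℝ) := h u
    _ = (inner ℝ w u : ℝ) := by rw [hAu]
    _ ≤ ‖w‖ * ‖u‖ := real_inner_le_norm w u
  rcases eq_or_lt_of_le (norm_nonneg u) with h0 | h0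
  · rw [← h0]
    positivity
  · have h2 : lam * ‖u‖ ≤ ‖w‖ := by nlinarith
    calc ‖u‖ = lam⁻¹ * (lam * ‖u‖) := by field_simp
    _ ≤ lam⁻¹ * ‖w‖ := by
        exact mul_le_mul_of_nonneg_left h2 (by positivity)

theorem cInv_diff_le {lam : ℝ} (hlam : 0 < lam) (A B : E →L[ℝ] E)
    (hA : ∀ ξ, lam * ‖ξ‖ ^ 2 ≤ (inner ℝ (A ξ) ξ : ℝ))
    (hB : ∀ ξ, lam * ‖ξ‖ ^ 2 ≤ (inner ℝ (B ξ) ξ : ℝ)) (w : E) :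
    ‖cInv A w - cInv B w‖ ≤ lam⁻¹ * (‖A - B‖ * (lam⁻¹ * ‖w‖)) := by
  have key : cInv A w - cInv B w = cInv A ((B - A) (cInv B w)) := by
    rw [ContinuousLinearMap.sub_apply, map_sub, cInv_right_inv hlam B hB w,
      cInv_left_inv hlam A hA]
  rw [key]
  calc ‖cInv A ((B - A) (cInv B w))‖ ≤ lam⁻¹ * ‖(B - A) (cInv B w)‖ :=
        cInv_norm_le hlam A hA _
  _ ≤ lam⁻¹ * (‖A - B‖ * (lam⁻¹ * ‖w‖)) := by
      apply mul_le_mul_of_nonneg_left _ (by positivity)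
      calc ‖(B - A) (cInv B w)‖ ≤ ‖B - A‖ * ‖cInv B w‖ := (B - A).le_opNorm _
      _ ≤ ‖A - B‖ * (lam⁻¹ * ‖w‖) := by
          rw [norm_sub_rev]
          exact mul_le_mul_of_nonneg_left (cInv_norm_le hlam B hB w) (norm_nonneg _)

theorem op_diff_le {F G : Type*} [NormedAddCommGroup F] [NormedSpace ℝ F]
    [NormedAddCommGroup G] [NormedSpace ℝ G]
    (P P' : F →L[ℝ] G) (v v' : F) {MP LP Mv Lv : ℝ}
    (hMP : ‖P‖ ≤ MP) (hLP : ‖P - P'‖ ≤ LP) (hMv : ‖v'‖ ≤ Mv) (hLv : ‖v - v'‖ ≤ Lv) :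
    ‖P v - P' v'‖ ≤ MP * Lv + LP * Mv := by
  have hid : P v - P' v' = P (v - v') + (P - P') v' := by
    simp only [map_sub, ContinuousLinearMap.sub_apply]
    abel
  rw [hid]
  have h1 : ‖P (v - v')‖ ≤ MP * Lv := by
    calc ‖P (v - v')‖ ≤ ‖P‖ * ‖v - v'‖ := P.le_opNorm _
    _ ≤ MP * Lv := mul_le_mul hMP hLv (norm_nonneg _) ((norm_nonneg P).trans hMP)
  have h2 : ‖(P - P') v'‖ ≤ LP * Mv := by
    calc ‖(P - P') v'‖ ≤ ‖P - P'‖ * ‖v'‖ := (P - P').le_opNorm _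
    _ ≤ LP * Mv := mul_le_mul hLP hMv (norm_nonneg _) ((norm_nonneg _).trans hLP)
  exact (norm_add_le _ _).trans (add_le_add h1 h2)

theorem contOn_of_dominated {W : Type*} [PseudoMetricSpace W] {s : Set ℝ} {g : ℝ → W}
    {h : ℝ → ℝ → ℝ}
    (hb : ∀ t₀ ∈ s, Filter.Tendsto (h t₀) (nhdsWithin t₀ s) (nhds 0))
    (hle : ∀ t₀ ∈ s, ∀ t ∈ s, dist (g t) (g t₀) ≤ h t₀ t) : ContinuousOn g s := by
  intro t₀ ht₀
  rw [ContinuousWithinAt, tendsto_iff_dist_tendsto_zero]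
  apply squeeze_zero' (Filter.Eventually.of_forall fun t => dist_nonneg)
    _ (hb t₀ ht₀)
  filter_upwards [self_mem_nhdsWithin] with t ht
  exact hle t₀ ht₀ t ht
/-- Let `σ, b̄, α, β̄` be bounded Lipschitz coefficients on `ℝ^d × ℝ^n`
(matrix-valued for `σ, α`), let `x ∈ C¹([0,T]; ℝ^d)`, `y₀ ∈ ℝ^n`, and assume the uniform
ellipticity `⟨σσ*(x_t, y)ξ, ξ⟩ ≥ λ_* |ξ|²` for all `t ∈ [0,T]`, `y`, `ξ`. Then there exist
`y ∈ C¹([0,T]; ℝ^n)` with `y(0) = y₀` and a continuous control `φ : [0,T] → ℝ^m` such that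
`x' = σ(x, y)φ + b̄(x, y)` and `y' = α(x, y)φ + β̄(x, y)` on `[0,T]`. -/
theorem stmt_13 (T : ℝ) (hT : 0 < T) (d n m : ℕ) (hd : 1 ≤ d) (hn : 1 ≤ n) (hm : 1 ≤ m)
    (σ : EuclideanSpace ℝ (Fin d) × EuclideanSpace ℝ (Fin n) →
      (EuclideanSpace ℝ (Fin m) →L[ℝ] EuclideanSpace ℝ (Fin d)))
    (bbar : EuclideanSpace ℝ (Fin d) × EuclideanSpace ℝ (Fin n) → EuclideanSpace ℝ (Fin d))
    (α : EuclideanSpace ℝ (Fin d) × EuclideanSpace ℝ (Fin n) →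
      (EuclideanSpace ℝ (Fin m) →L[ℝ] EuclideanSpace ℝ (Fin n)))
    (bbeta : EuclideanSpace ℝ (Fin d) × EuclideanSpace ℝ (Fin n) → EuclideanSpace ℝ (Fin n))
    (hσ : (∃ L : NNReal, LipschitzWith L σ) ∧ (∃ M, ∀ z, ‖σ z‖ ≤ M))
    (hbbar : (∃ L : NNReal, LipschitzWith L bbar) ∧ (∃ M, ∀ z, ‖bbar z‖ ≤ M))
    (hα : (∃ L : NNReal, LipschitzWith L α) ∧ (∃ M, ∀ z, ‖α z‖ ≤ M))
    (hbbeta : (∃ L : NNReal, LipschitzWith L bbeta) ∧ (∃ M, ∀ z, ‖bbeta z‖ ≤ M))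
    (x : ℝ → EuclideanSpace ℝ (Fin d)) (hx : ContDiffOn ℝ 1 x (Set.Icc 0 T))
    (y₀ : EuclideanSpace ℝ (Fin n)) (lam : ℝ) (hlam : 0 < lam)
    (hell : ∀ t ∈ Set.Icc (0 : ℝ) T, ∀ (y : EuclideanSpace ℝ (Fin n))
      (ξ : EuclideanSpace ℝ (Fin d)),
      lam * ‖ξ‖ ^ 2
        ≤ (inner ℝ (σ (x t, y) ((ContinuousLinearMap.adjoint (σ (x t, y))) ξ)) ξ : ℝ)) :
    ∃ (y : ℝ → EuclideanSpace ℝ (Fin n)) (φ : ℝ → EuclideanSpace ℝ (Fin m)),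
      ContDiffOn ℝ 1 y (Set.Icc 0 T) ∧ y 0 = y₀ ∧ ContinuousOn φ (Set.Icc 0 T) ∧
      ∀ t ∈ Set.Icc (0 : ℝ) T,
        derivWithin x (Set.Icc 0 T) t = σ (x t, y t) (φ t) + bbar (x t, y t) ∧
        derivWithin y (Set.Icc 0 T) t = α (x t, y t) (φ t) + bbeta (x t, y t) := by
  classical
  obtain ⟨⟨Lσ, hLσ⟩, ⟨Mσ, hMσ⟩⟩ := hσ
  obtain ⟨⟨Lb, hLb⟩, ⟨Mb, hMb⟩⟩ := hbbar
  obtain ⟨⟨Lα, hLα⟩, ⟨Mα, hMα⟩⟩ := hα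
  obtain ⟨⟨Lβ, hLβ⟩, ⟨Mβ, hMβ⟩⟩ := hbbeta
  set s : Set ℝ := Set.Icc 0 T with hsdef
  have uds : UniqueDiffOn ℝ s := uniqueDiffOn_Icc hT
  set x' : ℝ → EuclideanSpace ℝ (Fin d) := derivWithin x s with hx'def
  have hx'cont : ContinuousOn x' s := hx.continuousOn_derivWithin uds le_rfl
  obtain ⟨U, hU⟩ := isCompact_Icc.exists_bound_of_continuousOn hx'cont
  have h0s : (0 : ℝ) ∈ s := ⟨le_rfl, hT.le⟩
  have hU0 : 0 ≤ U := (norm_nonneg _).trans (hU 0 h0s)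
  have hMσ0 : 0 ≤ Mσ := (norm_nonneg _).trans (hMσ 0)
  have hMb0 : 0 ≤ Mb := (norm_nonneg _).trans (hMb 0)
  have hMα0 : 0 ≤ Mα := (norm_nonneg _).trans (hMα 0)
  have hMβ0 : 0 ≤ Mβ := (norm_nonneg _).trans (hMβ 0)
  have hLσ0 : (0 : ℝ) ≤ Lσ := Lσ.coe_nonneg
  have hlami : (0 : ℝ) ≤ lam⁻¹ := inv_nonneg.mpr hlam.le
  have hUMb : 0 ≤ lam⁻¹ * (U + Mb) := mul_nonneg hlami (add_nonneg hU0 hMb0)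
  -- the candidate control as a function of (z, u)
  set Φ : (EuclideanSpace ℝ (Fin d) × EuclideanSpace ℝ (Fin n)) →
      EuclideanSpace ℝ (Fin d) → EuclideanSpace ℝ (Fin m) := fun z u =>
    (ContinuousLinearMap.adjoint (σ z))
      (cInv ((σ z).comp (ContinuousLinearMap.adjoint (σ z))) (u - bbar z)) with hΦdef
  set G : (EuclideanSpace ℝ (Fin d) × EuclideanSpace ℝ (Fin n)) →
      EuclideanSpace ℝ (Fin d) → EuclideanSpace ℝ (Fin n) := fun z u =>
    α z (Φ z u) + bbeta z with hGdef
  set v : ℝ → EuclideanSpace ℝ (Fin n) → EuclideanSpace ℝ (Fin n) := fun t yy =>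
    G (x t, yy) (x' t) with hvdef
  -- constants
  set cP : ℝ := Mσ * (lam⁻¹ * (1 + ↑Lb) + lam⁻¹ * (2 * Mσ * ↑Lσ * (lam⁻¹ * (U + Mb)))) +
    ↑Lσ * (lam⁻¹ * (U + Mb)) with hcP
  set cG : ℝ := Mα * cP + ↑Lα * (Mσ * (lam⁻¹ * (U + Mb))) + ↑Lβ with hcG
  set C : ℝ := Mα * (Mσ * (lam⁻¹ * (U + Mb))) + Mβ with hCdef
  have hC0 : 0 ≤ C := by
    rw [hCdef]
    exact add_nonneg (mul_nonneg hMα0 (mul_nonneg hMσ0 hUMb)) hMβ0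
  -- coercivity at the relevant points
  have hco : ∀ t ∈ s, ∀ (yy : EuclideanSpace ℝ (Fin n)) (ξ : EuclideanSpace ℝ (Fin d)),
      lam * ‖ξ‖ ^ 2 ≤
      (inner ℝ (((σ (x t, yy)).comp (ContinuousLinearMap.adjoint (σ (x t, yy)))) ξ) ξ : ℝ) :=
    fun t ht yy ξ => hell t ht yy ξ
  -- the master Lipschitz-type estimate
  have key : ∀ t ∈ s, ∀ t' ∈ s, ∀ (ya yb : EuclideanSpace ℝ (Fin n)),
      ‖Φ (x t, ya) (x' t) - Φ (x t', yb) (x' t')‖ ≤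
        cP * (‖((x t, ya) : EuclideanSpace ℝ (Fin d) × EuclideanSpace ℝ (Fin n)) - (x t', yb)‖
          + ‖x' t - x' t'‖) ∧
      ‖G (x t, ya) (x' t) - G (x t', yb) (x' t')‖ ≤
        cG * (‖((x t, ya) : EuclideanSpace ℝ (Fin d) × EuclideanSpace ℝ (Fin n)) - (x t', yb)‖
          + ‖x' t - x' t'‖) := by
    intro t ht t' ht' ya yb
    simp only [hΦdef, hGdef]
    set z : EuclideanSpace ℝ (Fin d) × EuclideanSpace ℝ (Fin n) := (x t, ya) with hz
    set z' : EuclideanSpace ℝ (Fin d) × EuclideanSpace ℝ (Fin n) := (x t', yb) with hz'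
    set ρ : ℝ := ‖z - z'‖ + ‖x' t - x' t'‖ with hρ
    have hρ0 : 0 ≤ ρ := by rw [hρ]; positivity
    have hzz : ‖z - z'‖ ≤ ρ := le_add_of_nonneg_right (norm_nonneg _)
    have huu : ‖x' t - x' t'‖ ≤ ρ := le_add_of_nonneg_left (norm_nonneg _)
    have hco1 : ∀ ξ : EuclideanSpace ℝ (Fin d), lam * ‖ξ‖ ^ 2 ≤
        (inner ℝ (((σ z).comp (ContinuousLinearMap.adjoint (σ z))) ξ) ξ : ℝ) := hco t ht ya
    have hco2 : ∀ ξ : EuclideanSpace ℝ (Fin d), lam * ‖ξ‖ ^ 2 ≤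
        (inner ℝ (((σ z').comp (ContinuousLinearMap.adjoint (σ z'))) ξ) ξ : ℝ) := hco t' ht' yb
    have hσd : ‖σ z - σ z'‖ ≤ ↑Lσ * ρ := by
      have h := hLσ.dist_le_mul z z'
      rw [dist_eq_norm, dist_eq_norm] at h
      exact h.trans (mul_le_mul_of_nonneg_left hzz hLσ0)
    have hbd : ‖bbar z - bbar z'‖ ≤ ↑Lb * ρ := by
      have h := hLb.dist_le_mul z z'
      rw [dist_eq_norm, dist_eq_norm] at h
      exact h.trans (mul_le_mul_of_nonneg_left hzz Lb.coe_nonneg)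
    have hαd : ‖α z - α z'‖ ≤ ↑Lα * ρ := by
      have h := hLα.dist_le_mul z z'
      rw [dist_eq_norm, dist_eq_norm] at h
      exact h.trans (mul_le_mul_of_nonneg_left hzz Lα.coe_nonneg)
    have hβd : ‖bbeta z - bbeta z'‖ ≤ ↑Lβ * ρ := by
      have h := hLβ.dist_le_mul z z'
      rw [dist_eq_norm, dist_eq_norm] at h
      exact h.trans (mul_le_mul_of_nonneg_left hzz Lβ.coe_nonneg)
    have hadjd : ‖ContinuousLinearMap.adjoint (σ z) - ContinuousLinearMap.adjoint (σ z')‖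
        ≤ ↑Lσ * ρ := by
      rw [← map_sub, LinearIsometryEquiv.norm_map]
      exact hσd
    have hadjMz : ‖ContinuousLinearMap.adjoint (σ z)‖ ≤ Mσ := by
      rw [LinearIsometryEquiv.norm_map]; exact hMσ z
    have hadjMz' : ‖ContinuousLinearMap.adjoint (σ z')‖ ≤ Mσ := by
      rw [LinearIsometryEquiv.norm_map]; exact hMσ z'
    have hAd : ‖(σ z).comp (ContinuousLinearMap.adjoint (σ z)) -
        (σ z').comp (ContinuousLinearMap.adjoint (σ z'))‖ ≤ 2 * Mσ * ↑Lσ * ρ := by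
      refine ContinuousLinearMap.opNorm_le_bound _
        (mul_nonneg (mul_nonneg (mul_nonneg (by norm_num) hMσ0) hLσ0) hρ0) fun ξ => ?_
      have h1 : ‖ContinuousLinearMap.adjoint (σ z) ξ - ContinuousLinearMap.adjoint (σ z') ξ‖
          ≤ (↑Lσ * ρ) * ‖ξ‖ := by
        calc ‖ContinuousLinearMap.adjoint (σ z) ξ - ContinuousLinearMap.adjoint (σ z') ξ‖
            = ‖(ContinuousLinearMap.adjoint (σ z) - ContinuousLinearMap.adjoint (σ z')) ξ‖ := by
              rw [ContinuousLinearMap.sub_apply]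
        _ ≤ ‖ContinuousLinearMap.adjoint (σ z) - ContinuousLinearMap.adjoint (σ z')‖ * ‖ξ‖ :=
              ContinuousLinearMap.le_opNorm _ _
        _ ≤ (↑Lσ * ρ) * ‖ξ‖ := mul_le_mul_of_nonneg_right hadjd (norm_nonneg _)
      have h2 : ‖ContinuousLinearMap.adjoint (σ z') ξ‖ ≤ Mσ * ‖ξ‖ :=
        (ContinuousLinearMap.le_opNorm _ _).trans
          (mul_le_mul_of_nonneg_right hadjMz' (norm_nonneg _))
      have h3 := op_diff_le (σ z) (σ z') (ContinuousLinearMap.adjoint (σ z) ξ)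
        (ContinuousLinearMap.adjoint (σ z') ξ) (hMσ z) hσd h2 h1
      calc ‖((σ z).comp (ContinuousLinearMap.adjoint (σ z)) -
              (σ z').comp (ContinuousLinearMap.adjoint (σ z'))) ξ‖
          = ‖σ z (ContinuousLinearMap.adjoint (σ z) ξ) -
              σ z' (ContinuousLinearMap.adjoint (σ z') ξ)‖ := by
            rw [ContinuousLinearMap.sub_apply, ContinuousLinearMap.comp_apply,
              ContinuousLinearMap.comp_apply]
      _ ≤ Mσ * ((↑Lσ * ρ) * ‖ξ‖) + (↑Lσ * ρ) * (Mσ * ‖ξ‖) := h3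
      _ = 2 * Mσ * ↑Lσ * ρ * ‖ξ‖ := by ring
    set w : EuclideanSpace ℝ (Fin d) := x' t - bbar z with hw
    set w' : EuclideanSpace ℝ (Fin d) := x' t' - bbar z' with hw'
    set q := cInv ((σ z).comp (ContinuousLinearMap.adjoint (σ z))) w with hqd0
    set q' := cInv ((σ z').comp (ContinuousLinearMap.adjoint (σ z'))) w' with hqd0'
    have hwB : ‖w‖ ≤ U + Mb := (norm_sub_le _ _).trans (add_le_add (hU t ht) (hMb z))
    have hwB' : ‖w'‖ ≤ U + Mb := (norm_sub_le _ _).trans (add_le_add (hU t' ht') (hMb z'))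
    have hwd : ‖w - w'‖ ≤ (1 + ↑Lb) * ρ := by
      have hid : w - w' = (x' t - x' t') - (bbar z - bbar z') := by rw [hw, hw']; abel
      calc ‖w - w'‖ = ‖(x' t - x' t') - (bbar z - bbar z')‖ := by rw [hid]
      _ ≤ ‖x' t - x' t'‖ + ‖bbar z - bbar z'‖ := norm_sub_le _ _
      _ ≤ ρ + ↑Lb * ρ := add_le_add huu hbd
      _ = (1 + ↑Lb) * ρ := by ring
    have hqB : ‖q‖ ≤ lam⁻¹ * (U + Mb) :=
      (cInv_norm_le hlam _ hco1 w).trans (mul_le_mul_of_nonneg_left hwB hlami)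
    have hqB' : ‖q'‖ ≤ lam⁻¹ * (U + Mb) :=
      (cInv_norm_le hlam _ hco2 w').trans (mul_le_mul_of_nonneg_left hwB' hlami)
    have hqdiff : ‖q - q'‖ ≤
        (lam⁻¹ * (1 + ↑Lb) + lam⁻¹ * (2 * Mσ * ↑Lσ * (lam⁻¹ * (U + Mb)))) * ρ := by
      have e1 : ‖cInv ((σ z).comp (ContinuousLinearMap.adjoint (σ z))) w -
          cInv ((σ z).comp (ContinuousLinearMap.adjoint (σ z))) w'‖
          ≤ lam⁻¹ * ((1 + ↑Lb) * ρ) := by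
        rw [← map_sub]
        exact (cInv_norm_le hlam _ hco1 _).trans (mul_le_mul_of_nonneg_left hwd hlami)
      have e2 : ‖cInv ((σ z).comp (ContinuousLinearMap.adjoint (σ z))) w' -
          cInv ((σ z').comp (ContinuousLinearMap.adjoint (σ z'))) w'‖
          ≤ lam⁻¹ * ((2 * Mσ * ↑Lσ * ρ) * (lam⁻¹ * (U + Mb))) := by
        refine (cInv_diff_le hlam _ _ hco1 hco2 w').trans ?_
        refine mul_le_mul_of_nonneg_left ?_ hlami
        exact mul_le_mul hAd (mul_le_mul_of_nonneg_left hwB' hlami)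
          (mul_nonneg hlami (norm_nonneg _))
          (mul_nonneg (mul_nonneg (mul_nonneg (by norm_num) hMσ0) hLσ0) hρ0)
      have hsplit : q - q' = (q - cInv ((σ z).comp (ContinuousLinearMap.adjoint (σ z))) w') +
          (cInv ((σ z).comp (ContinuousLinearMap.adjoint (σ z))) w' - q') :=
        (sub_add_sub_cancel _ _ _).symm
      calc ‖q - q'‖ ≤ ‖q - cInv ((σ z).comp (ContinuousLinearMap.adjoint (σ z))) w'‖ +
            ‖cInv ((σ z).comp (ContinuousLinearMap.adjoint (σ z))) w' - q'‖ := by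
            rw [hsplit]; exact norm_add_le _ _
      _ ≤ lam⁻¹ * ((1 + ↑Lb) * ρ) + lam⁻¹ * ((2 * Mσ * ↑Lσ * ρ) * (lam⁻¹ * (U + Mb))) :=
            add_le_add e1 e2
      _ = (lam⁻¹ * (1 + ↑Lb) + lam⁻¹ * (2 * Mσ * ↑Lσ * (lam⁻¹ * (U + Mb)))) * ρ := by ring
    have hΦd : ‖ContinuousLinearMap.adjoint (σ z) q - ContinuousLinearMap.adjoint (σ z') q'‖
        ≤ cP * ρ := by
      have h5 := op_diff_le (ContinuousLinearMap.adjoint (σ z))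
        (ContinuousLinearMap.adjoint (σ z')) q q' hadjMz hadjd hqB' hqdiff
      refine h5.trans ?_
      rw [hcP]; ring_nf; rfl
    refine ⟨hΦd, ?_⟩
    have hΦB' : ‖ContinuousLinearMap.adjoint (σ z') q'‖ ≤ Mσ * (lam⁻¹ * (U + Mb)) :=
      (ContinuousLinearMap.le_opNorm _ _).trans (mul_le_mul hadjMz' hqB' (norm_nonneg _) hMσ0)
    have h6 := op_diff_le (α z) (α z') (ContinuousLinearMap.adjoint (σ z) q)
      (ContinuousLinearMap.adjoint (σ z') q') (hMα z) hαd hΦB' hΦd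
    calc ‖(α z (ContinuousLinearMap.adjoint (σ z) q) + bbeta z) -
          (α z' (ContinuousLinearMap.adjoint (σ z') q') + bbeta z')‖
        ≤ ‖α z (ContinuousLinearMap.adjoint (σ z) q) -
            α z' (ContinuousLinearMap.adjoint (σ z') q')‖ + ‖bbeta z - bbeta z'‖ := by
          rw [add_sub_add_comm]; exact norm_add_le _ _
    _ ≤ (Mα * (cP * ρ) + (↑Lα * ρ) * (Mσ * (lam⁻¹ * (U + Mb)))) + ↑Lβ * ρ :=
          add_le_add h6 hβd
    _ = cG * ρ := by rw [hcG]; ring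
  -- bound on v
  have hvB : ∀ t ∈ s, ∀ yy : EuclideanSpace ℝ (Fin n), ‖v t yy‖ ≤ C := by
    intro t ht yy
    simp only [hvdef, hGdef, hΦdef]
    have hco1 := hco t ht yy
    have hwB : ‖x' t - bbar (x t, yy)‖ ≤ U + Mb :=
      (norm_sub_le _ _).trans (add_le_add (hU t ht) (hMb _))
    have hqB : ‖cInv ((σ (x t, yy)).comp (ContinuousLinearMap.adjoint (σ (x t, yy))))
        (x' t - bbar (x t, yy))‖ ≤ lam⁻¹ * (U + Mb) :=
      (cInv_norm_le hlam _ hco1 _).trans (mul_le_mul_of_nonneg_left hwB hlami)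
    have hΦB : ‖(ContinuousLinearMap.adjoint (σ (x t, yy)))
        (cInv ((σ (x t, yy)).comp (ContinuousLinearMap.adjoint (σ (x t, yy))))
        (x' t - bbar (x t, yy)))‖ ≤ Mσ * (lam⁻¹ * (U + Mb)) := by
      refine (ContinuousLinearMap.le_opNorm _ _).trans ?_
      refine mul_le_mul ?_ hqB (norm_nonneg _) hMσ0
      rw [LinearIsometryEquiv.norm_map]; exact hMσ _
    calc ‖α (x t, yy) _ + bbeta (x t, yy)‖ ≤ ‖α (x t, yy) _‖ + ‖bbeta (x t, yy)‖ :=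
          norm_add_le _ _
    _ ≤ Mα * (Mσ * (lam⁻¹ * (U + Mb))) + Mβ := by
        refine add_le_add ?_ (hMβ _)
        refine (ContinuousLinearMap.le_opNorm _ _).trans ?_
        exact mul_le_mul (hMα _) hΦB (norm_nonneg _) hMα0
    _ = C := by rw [hCdef]
  -- Picard-Lindelöf
  have hPL : IsPicardLindelof v (tmin := 0) (tmax := T) ⟨0, h0s⟩ y₀ (C * T).toNNReal 0
      C.toNNReal cG.toNNReal := by
    constructor
    · intro t ht
      refine LipschitzWith.lipschitzOnWith ?_
      refine LipschitzWith.of_dist_le_mul fun ya yb => ?_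
      have hpn : ‖((x t, ya) : EuclideanSpace ℝ (Fin d) × EuclideanSpace ℝ (Fin n)) -
          (x t, yb)‖ = ‖ya - yb‖ := by
        have : ((x t, ya) : EuclideanSpace ℝ (Fin d) × EuclideanSpace ℝ (Fin n)) -
            (x t, yb) = (0, ya - yb) := by
          rw [Prod.mk_sub_mk, sub_self]
        rw [this]
        show max ‖(0 : EuclideanSpace ℝ (Fin d))‖ ‖ya - yb‖ = ‖ya - yb‖
        rw [norm_zero]
        exact max_eq_right (norm_nonneg _)
      have h1 := (key t ht t ht ya yb).2
      rw [hpn, sub_self, norm_zero, add_zero] at h1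
      calc dist (v t ya) (v t yb) = ‖G (x t, ya) (x' t) - G (x t, yb) (x' t)‖ := by
            rw [dist_eq_norm]
      _ ≤ cG * ‖ya - yb‖ := h1
      _ ≤ ↑cG.toNNReal * dist ya yb := by
            rw [dist_eq_norm]
            exact mul_le_mul_of_nonneg_right (Real.le_coe_toNNReal cG) (norm_nonneg _)
    · intro yy _
      refine contOn_of_dominated (h := fun t₀ t => cG *
        (‖((x t, yy) : EuclideanSpace ℝ (Fin d) × EuclideanSpace ℝ (Fin n)) - (x t₀, yy)‖
          + ‖x' t - x' t₀‖)) ?_ ?_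
      · intro t₀ ht₀
        have hcx : ContinuousWithinAt (fun t => cG *
            (‖((x t, yy) : EuclideanSpace ℝ (Fin d) × EuclideanSpace ℝ (Fin n)) - (x t₀, yy)‖
              + ‖x' t - x' t₀‖)) s t₀ := by
          refine continuousWithinAt_const.mul (ContinuousWithinAt.add ?_ ?_)
          · exact (((hx.continuousOn t₀ ht₀).prodMk continuousWithinAt_const).sub
              continuousWithinAt_const).norm
          · exact ((hx'cont t₀ ht₀).sub continuousWithinAt_const).norm
        have := hcx
        rw [ContinuousWithinAt] at this
        simpa using this
      · intro t₀ ht₀ t ht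
        rw [dist_eq_norm]
        exact (key t ht t₀ ht₀ yy yy).2
    · intro t ht yy _
      exact (hvB t ht yy).trans (Real.le_coe_toNNReal C)
    · have hmax : max (T - 0) (0 - 0) = T := by
        rw [sub_zero, sub_self]; exact max_eq_left hT.le
      show (C.toNNReal : ℝ) * max (T - 0) (0 - 0) ≤ ((C * T).toNNReal : ℝ) - ((0 : NNReal) : ℝ)
      rw [hmax, Real.coe_toNNReal _ hC0, Real.coe_toNNReal _ (mul_nonneg hC0 hT.le),
        NNReal.coe_zero, sub_zero]
  obtain ⟨y, hy0, hyd⟩ := IsPicardLindelof.exists_eq_forall_mem_Icc_hasDerivWithinAt₀ hPL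
  have hycont : ContinuousOn y s := fun t ht =>
    (hyd t ht).differentiableWithinAt.continuousWithinAt
  have hyderiv : ∀ t ∈ s, derivWithin y s t = v t (y t) := fun t ht =>
    (hyd t ht).derivWithin (uds t ht)
  set φ : ℝ → EuclideanSpace ℝ (Fin m) := fun t => Φ (x t, y t) (x' t) with hφdef
  have hφcont : ContinuousOn φ s := by
    refine contOn_of_dominated (h := fun t₀ t => cP *
      (‖((x t, y t) : EuclideanSpace ℝ (Fin d) × EuclideanSpace ℝ (Fin n)) - (x t₀, y t₀)‖
        + ‖x' t - x' t₀‖)) ?_ ?_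
    · intro t₀ ht₀
      have hcx : ContinuousWithinAt (fun t => cP *
          (‖((x t, y t) : EuclideanSpace ℝ (Fin d) × EuclideanSpace ℝ (Fin n)) - (x t₀, y t₀)‖
            + ‖x' t - x' t₀‖)) s t₀ := by
        refine continuousWithinAt_const.mul (ContinuousWithinAt.add ?_ ?_)
        · exact (((hx.continuousOn t₀ ht₀).prodMk (hycont t₀ ht₀)).sub
            continuousWithinAt_const).norm
        · exact ((hx'cont t₀ ht₀).sub continuousWithinAt_const).norm
      have := hcx
      rw [ContinuousWithinAt] at this
      simpa using this
    · intro t₀ ht₀ t ht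
      rw [dist_eq_norm]
      exact (key t ht t₀ ht₀ (y t) (y t₀)).1
  have hvycont : ContinuousOn (fun t => v t (y t)) s := by
    refine contOn_of_dominated (h := fun t₀ t => cG *
      (‖((x t, y t) : EuclideanSpace ℝ (Fin d) × EuclideanSpace ℝ (Fin n)) - (x t₀, y t₀)‖
        + ‖x' t - x' t₀‖)) ?_ ?_
    · intro t₀ ht₀
      have hcx : ContinuousWithinAt (fun t => cG *
          (‖((x t, y t) : EuclideanSpace ℝ (Fin d) × EuclideanSpace ℝ (Fin n)) - (x t₀, y t₀)‖
            + ‖x' t - x' t₀‖)) s t₀ := by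
        refine continuousWithinAt_const.mul (ContinuousWithinAt.add ?_ ?_)
        · exact (((hx.continuousOn t₀ ht₀).prodMk (hycont t₀ ht₀)).sub
            continuousWithinAt_const).norm
        · exact ((hx'cont t₀ ht₀).sub continuousWithinAt_const).norm
      have := hcx
      rw [ContinuousWithinAt] at this
      simpa using this
    · intro t₀ ht₀ t ht
      rw [dist_eq_norm]
      exact (key t ht t₀ ht₀ (y t) (y t₀)).2
  have hyc1 : ContDiffOn ℝ 1 y s := by
    rw [show (1 : WithTop ℕ∞) = 0 + 1 from (zero_add 1).symm,
      contDiffOn_succ_iff_derivWithin uds]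
    refine ⟨fun t ht => (hyd t ht).differentiableWithinAt, ?_, ?_⟩
    · intro h; simp at h
    · rw [contDiffOn_zero]
      exact hvycont.congr hyderiv
  refine ⟨y, φ, hyc1, hy0, hφcont, fun t ht => ⟨?_, ?_⟩⟩
  · have hco1 := hco t ht (y t)
    have h2 : σ (x t, y t) (φ t) = x' t - bbar (x t, y t) := by
      simp only [hφdef, hΦdef]
      exact cInv_right_inv hlam _ hco1 _
    rw [h2]
    abel
  · rw [hyderiv t ht]
end
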